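/- Let a,b,c ≥ 2 be integers and let L = L(a,b,c) be the abelian group with generators x₁, x₂, x₃ and relations a·x₁ = b·x₂ = c·x₃ (denote this common element by c⃗, the canonical element). Then every element y of L can be written uniquely in the normal form y = n₁·x₁ + n₂·x₂ + n₃·x₃ + m·c⃗ with integers m, n₁, n₂, n₃ satisfying 0 ≤ n₁ < a, 0 ≤ n₂ < b, 0 ≤ n₃ < c. -/

import Mathlib

/-- The subgroup of relations defining L(a,b,c). -/
def LRel (a b c : ℕ) : AddSubgroup (ℤ × ℤ × ℤ) :=
  AddSubgroup.closure {((a : ℤ), -(b : ℤ), 0), ((0 : ℤ), (b : ℤ), -(c : ℤ))}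

/-- The rank-one abelian group L(a,b,c) on generators x₁,x₂,x₃ with a·x₁ = b·x₂ = c·x₃. -/
abbrev LGrp (a b c : ℕ) := (ℤ × ℤ × ℤ) ⧸ LRel a b c

def Lx1 (a b c : ℕ) : LGrp a b c := QuotientAddGroup.mk (1, 0, 0)
def Lx2 (a b c : ℕ) : LGrp a b c := QuotientAddGroup.mk (0, 1, 0)
def Lx3 (a b c : ℕ) : LGrp a b c := QuotientAddGroup.mk (0, 0, 1)

/-- Canonical element c⃗ = a·x₁. -/
def Lcan (a b c : ℕ) : LGrp a b c := (a : ℤ) • Lx1 a b c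

/-- Dualizing element ω = c⃗ − (x₁+x₂+x₃). -/
def Lomega (a b c : ℕ) : LGrp a b c :=
  Lcan a b c - (Lx1 a b c + Lx2 a b c + Lx3 a b c)

/-- Dominant element δ⃗ = c⃗ + 2ω. -/
def Ldelta (a b c : ℕ) : LGrp a b c := Lcan a b c + (2 : ℤ) • Lomega a b c

/-- The partial order on L given by the positive cone ℕx₁+ℕx₂+ℕx₃ : u ≤ v iff v−u ∈ ℕx₁+ℕx₂+ℕx₃. -/
def Lle (a b c : ℕ) (u v : LGrp a b c) : Prop :=
  ∃ n1 n2 n3 : ℕ,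
    v - u = (n1 : ℤ) • Lx1 a b c + (n2 : ℤ) • Lx2 a b c + (n3 : ℤ) • Lx3 a b c

lemma mem_LRel_iff (a b c : ℕ) (u v w : ℤ) :
    (u, v, w) ∈ LRel a b c ↔ ∃ s t : ℤ, u = s * a ∧ v = (t - s) * b ∧ w = -(t * c) := by
  constructor
  · intro h
    have : ∀ x ∈ LRel a b c, ∃ s t : ℤ, x = (s * a, (t - s) * b, -(t * c)) := by
      intro x hx
      refine AddSubgroup.closure_induction ?_ ?_ ?_ ?_ hx
      · rintro y (rfl | rfl)
        · exact ⟨1, 0, by simp⟩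
        · exact ⟨0, 1, by simp⟩
      · exact ⟨0, 0, by simp; rfl⟩
      · rintro x y _ _ ⟨s, t, rfl⟩ ⟨s', t', rfl⟩
        exact ⟨s + s', t + t', by
          simp only [Prod.mk_add_mk, Prod.ext_iff]; refine ⟨by ring, by ring, by ring⟩⟩
      · rintro x _ ⟨s, t, rfl⟩
        exact ⟨-s, -t, by
          simp only [Prod.neg_mk, Prod.ext_iff]; refine ⟨by ring, by ring, by ring⟩⟩
    obtain ⟨s, t, hx⟩ := this _ h
    exact ⟨s, t, by simpa [Prod.ext_iff] using hx⟩
  · rintro ⟨s, t, rfl, rfl, rfl⟩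
    have h1 : ((a : ℤ), -(b : ℤ), (0:ℤ)) ∈ LRel a b c :=
      AddSubgroup.subset_closure (by simp)
    have h2 : ((0 : ℤ), (b : ℤ), -(c : ℤ)) ∈ LRel a b c :=
      AddSubgroup.subset_closure (by simp)
    have := AddSubgroup.add_mem _ (AddSubgroup.zsmul_mem _ h1 s) (AddSubgroup.zsmul_mem _ h2 t)
    convert this using 2 <;> simp [Prod.ext_iff] <;> ring

lemma mk_eq_comb (a b c : ℕ) (p q r : ℤ) :
    (QuotientAddGroup.mk (p, q, r) : LGrp a b c)
      = p • Lx1 a b c + q • Lx2 a b c + r • Lx3 a b c := by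
  simp only [Lx1, Lx2, Lx3, ← QuotientAddGroup.mk_zsmul, ← QuotientAddGroup.mk_add,
    Prod.smul_mk, smul_eq_mul, Prod.mk_add_mk]
  norm_num

/-- Every element of L(a,b,c) has a unique normal form
    y = n₁x₁ + n₂x₂ + n₃x₃ + m·c⃗ with 0 ≤ nᵢ < pᵢ. -/
theorem normal_form_unique (a b c : ℕ) (ha : 2 ≤ a) (hb : 2 ≤ b) (hc : 2 ≤ c)
    (y : LGrp a b c) :
    ∃! q : ℤ × ℤ × ℤ × ℤ,
      (0 ≤ q.2.1 ∧ q.2.1 < (a : ℤ)) ∧ (0 ≤ q.2.2.1 ∧ q.2.2.1 < (b : ℤ)) ∧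
      (0 ≤ q.2.2.2 ∧ q.2.2.2 < (c : ℤ)) ∧
      y = q.2.1 • Lx1 a b c + q.2.2.1 • Lx2 a b c + q.2.2.2 • Lx3 a b c
            + q.1 • Lcan a b c := by
  have ha0 : (0:ℤ) < (a:ℤ) := by exact_mod_cast Nat.lt_of_lt_of_le Nat.zero_lt_two ha
  have hb0 : (0:ℤ) < (b:ℤ) := by exact_mod_cast Nat.lt_of_lt_of_le Nat.zero_lt_two hb
  have hc0 : (0:ℤ) < (c:ℤ) := by exact_mod_cast Nat.lt_of_lt_of_le Nat.zero_lt_two hc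
  -- rewrite combination as single mk
  have key : ∀ m n1 n2 n3 : ℤ,
      n1 • Lx1 a b c + n2 • Lx2 a b c + n3 • Lx3 a b c + m • Lcan a b c
        = (QuotientAddGroup.mk (n1 + m * a, n2, n3) : LGrp a b c) := by
    intro m n1 n2 n3
    rw [mk_eq_comb, Lcan, smul_smul]
    module
  obtain ⟨⟨p, q, r⟩, rfl⟩ := QuotientAddGroup.mk_surjective y
  refine ⟨⟨p / a + q / b + r / c, p % a, q % b, r % c⟩,
    ⟨⟨Int.emod_nonneg _ ha0.ne', Int.emod_lt_of_pos _ ha0⟩,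
     ⟨Int.emod_nonneg _ hb0.ne', Int.emod_lt_of_pos _ hb0⟩,
     ⟨Int.emod_nonneg _ hc0.ne', Int.emod_lt_of_pos _ hc0⟩, ?_⟩, ?_⟩
  · rw [key, QuotientAddGroup.eq]
    rw [mem_LRel_iff]
    refine ⟨q / b + r / c, r / c, ?_, ?_, ?_⟩
    · have := Int.emod_add_mul_ediv p (a:ℤ)
      simp only [Prod.neg_mk, Prod.mk_add_mk]
      ring_nf
      linarith [Int.emod_add_mul_ediv p (a:ℤ)]
    · simp only [Prod.neg_mk, Prod.mk_add_mk]
      linarith [Int.emod_add_mul_ediv q (b:ℤ)]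
    · simp only [Prod.neg_mk, Prod.mk_add_mk]
      linarith [Int.emod_add_mul_ediv r (c:ℤ)]
  · rintro ⟨m, n1, n2, n3⟩ ⟨⟨h1a, h1b⟩, ⟨h2a, h2b⟩, ⟨h3a, h3b⟩, heq⟩
    dsimp only at h1a h1b h2a h2b h3a h3b heq
    rw [key, Eq.comm, QuotientAddGroup.eq, mem_LRel_iff] at heq
    obtain ⟨s, t, hu, hv, hw⟩ := heq
    simp only [Prod.neg_mk, Prod.mk_add_mk] at hu hv hw
    have e1 : p % (a:ℤ) + (a:ℤ) * (p / a) = p := Int.emod_add_mul_ediv p a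
    have e2 : q % (b:ℤ) + (b:ℤ) * (q / b) = q := Int.emod_add_mul_ediv q b
    have e3 : r % (c:ℤ) + (c:ℤ) * (r / c) = r := Int.emod_add_mul_ediv r c
    have hn1 : n1 = p % a := by
      have hd : (a:ℤ) ∣ p % a - n1 := ⟨s + m - p / a, by linear_combination hu + e1⟩
      have hb1 : 0 ≤ p % (a:ℤ) := Int.emod_nonneg _ ha0.ne'
      have hb2 : p % (a:ℤ) < a := Int.emod_lt_of_pos _ ha0
      have := Int.eq_zero_of_abs_lt_dvd hd (by rw [abs_lt]; omega)
      omega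
    have hn2 : n2 = q % b := by
      have hd : (b:ℤ) ∣ q % b - n2 := ⟨t - s - q / b, by linear_combination hv + e2⟩
      have hb1 : 0 ≤ q % (b:ℤ) := Int.emod_nonneg _ hb0.ne'
      have hb2 : q % (b:ℤ) < b := Int.emod_lt_of_pos _ hb0
      have := Int.eq_zero_of_abs_lt_dvd hd (by rw [abs_lt]; omega)
      omega
    have hn3 : n3 = r % c := by
      have hd : (c:ℤ) ∣ r % c - n3 := ⟨-t - r / c, by linear_combination hw + e3⟩
      have hb1 : 0 ≤ r % (c:ℤ) := Int.emod_nonneg _ hc0.ne'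
      have hb2 : r % (c:ℤ) < c := Int.emod_lt_of_pos _ hc0
      have := Int.eq_zero_of_abs_lt_dvd hd (by rw [abs_lt]; omega)
      omega
    have ht : t = -(r / c) := by
      have h0 : (t + r / c) * c = 0 := by rw [hn3] at hw; linear_combination hw + e3
      rcases mul_eq_zero.mp h0 with h | h
      · linarith
      · exact absurd h hc0.ne'
    have hs : s = -(q / b) - r / c := by
      have h0 : (t - s - q / b) * b = 0 := by rw [hn2] at hv; linear_combination -hv - e2
      rcases mul_eq_zero.mp h0 with h | h
      · linarith
      · exact absurd h hb0.ne'
    have hm : m = p / a + q / b + r / c := by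
      have h0 : (p / a - m - s) * a = 0 := by rw [hn1] at hu; linear_combination hu + e1
      rcases mul_eq_zero.mp h0 with h | h
      · linarith
      · exact absurd h ha0.ne'
    simp [hn1, hn2, hn3, hm, Prod.ext_iff]
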